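/- Let G be a finite group of even order n ≥ 16 possessing a subgroup H of index 2, and let S ⊆ G \ {0} with |S| = n/2. Then Σ(S) = G, where Σ(S) denotes the set of all sums over nonempty subsets of S in some order. -/

import Mathlib

set_option linter.unusedSectionVars false
set_option maxHeartbeats 1600000

open Pointwise

/-- The set of all sums over nonempty subsets of `S`, with elements summed in some order. -/
def sumset {G : Type*} [AddGroup G] (S : Finset G) : Set G :=
  {g | ∃ l : List G, l.Nodup ∧ l ≠ [] ∧ (∀ x ∈ l, x ∈ S) ∧ l.sum = g}

namespace Stmt15Aux

variable {G : Type*} [AddGroup G] [DecidableEq G]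

lemma pigeon (U V W : Finset G) (hU : U ⊆ W) (hV : V ⊆ W)
    (h : W.card < U.card + V.card) : ∃ x, x ∈ U ∧ x ∈ V := by
  by_contra hc
  push_neg at hc
  have hdisj : U ∩ V = ∅ := by
    ext x
    simp only [Finset.mem_inter, Finset.notMem_empty, iff_false, not_and]
    exact hc x
  have h1 : (U ∪ V).card + (U ∩ V).card = U.card + V.card :=
    Finset.card_union_add_card_inter U V
  have h2 : (U ∪ V).card ≤ W.card := Finset.card_le_card (Finset.union_subset hU hV)
  rw [hdisj] at h1
  simp at h1
  omega

/-- Sums of (possibly empty) nodup lists with entries in `X`. -/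
def sumsOf (X : Finset G) : Set G :=
  {g | ∃ l : List G, l.Nodup ∧ (∀ x ∈ l, x ∈ X) ∧ l.sum = g}

lemma zero_mem_sumsOf (X : Finset G) : (0 : G) ∈ sumsOf X :=
  ⟨[], by simp, by simp, by simp⟩

lemma mem_sumsOf_single {X : Finset G} {x : G} (h : x ∈ X) : x ∈ sumsOf X :=
  ⟨[x], by simp, by simpa, by simp⟩

lemma mem_sumsOf_insert0 {A : Finset G} {t : G} (h : t ∈ insert (0:G) A) : t ∈ sumsOf A := by
  rcases Finset.mem_insert.1 h with h | h
  · rw [h]; exact zero_mem_sumsOf A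
  · exact mem_sumsOf_single h

lemma sumsOf_append {X : Finset G} {x q : G} (hx : x ∈ sumsOf X) (hq : q ∉ X) :
    x + q ∈ sumsOf (insert q X) := by
  obtain ⟨l, hnd, hmem, hsum⟩ := hx
  refine ⟨l ++ [q], ?_, ?_, ?_⟩
  · rw [List.nodup_append]
    refine ⟨hnd, by simp, ?_⟩
    suffices hq' : q ∉ l from fun a ha b hb hab => hq' (by simp at hb; rw [← hb, ← hab]; exact ha)
    intro hql
    exact hq (hmem q hql)
  · intro y hy
    rcases List.mem_append.1 hy with h | h
    · exact Finset.mem_insert_of_mem (hmem y h)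
    · simp at h
      rw [h]
      exact Finset.mem_insert_self _ _
  · simp [hsum]

lemma sumset_step {S X : Finset G} (hXS : X ⊆ S) {x s : G} (hx : x ∈ sumsOf X)
    (hs : s ∈ S) (hsX : s ∉ X) : x + s ∈ sumset S := by
  obtain ⟨l, hnd, hmem, hsum⟩ := hx
  refine ⟨l ++ [s], ?_, by simp, ?_, ?_⟩
  · rw [List.nodup_append]
    refine ⟨hnd, by simp, ?_⟩
    suffices hq' : s ∉ l from fun a ha b hb hab => hq' (by simp at hb; rw [← hb, ← hab]; exact ha)
    intro hsl
    exact hsX (hmem s hsl)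
  · intro y hy
    rcases List.mem_append.1 hy with h | h
    · exact hXS (hmem y h)
    · simp at h
      rw [h]; exact hs
  · simp [hsum]

lemma mem_sumset_of_list {S : Finset G} {l : List G} (hnd : l.Nodup) (hne : l ≠ [])
    (hmem : ∀ x ∈ l, x ∈ S) {g : G} (hsum : l.sum = g) : g ∈ sumset S :=
  ⟨l, hnd, hne, hmem, hsum⟩

lemma list_sum_mem_H (H : AddSubgroup G) :
    ∀ (l : List G), (∀ x ∈ l, x ∈ H) → l.sum ∈ H := by
  intro l
  induction l with
  | nil => intro _; simp [H.zero_mem]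
  | cons x xs ih =>
    intro h
    simp only [List.sum_cons]
    exact H.add_mem (h x (by simp)) (ih (fun y hy => h y (by simp [hy])))

lemma exists_addSubgroup_of_closed (C : Finset G) (h0 : (0:G) ∈ C)
    (hadd : ∀ x ∈ C, ∀ y ∈ C, x + y ∈ C) :
    ∃ W : AddSubgroup G, (W : Set G) = ↑C := by
  have hneg : ∀ x ∈ C, -x ∈ C := by
    intro x hx
    have himg : C.image (fun y => x + y) = C :=
      Finset.eq_of_subset_of_card_le
        (fun z hz => by
          obtain ⟨y, hy, rfl⟩ := Finset.mem_image.1 hz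
          exact hadd x hx y hy)
        (le_of_eq (Finset.card_image_of_injective C (add_right_injective x)).symm)
    have h0' : (0:G) ∈ C.image (fun y => x + y) := by rw [himg]; exact h0
    obtain ⟨y, hy, hxy⟩ := Finset.mem_image.1 h0'
    have hyx : y = -x := eq_neg_of_add_eq_zero_right hxy
    rwa [← hyx]
  refine ⟨{ carrier := ↑C
            add_mem' := fun ha hb => hadd _ ha _ hb
            zero_mem' := h0
            neg_mem' := fun ha => hneg _ ha }, rfl⟩

/-- A finite set containing 0 closed under sums of distinct elements is a subgroup,
or a subgroup minus a single point (the common square of the "defect" elements). -/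
lemma closed_structure (M : Finset G) (h0 : (0:G) ∈ M)
    (hcl : ∀ x ∈ M, ∀ y ∈ M, x ≠ y → x + y ∈ M) (h4 : 4 ≤ M.card) :
    (∃ W : AddSubgroup G, (W : Set G) = ↑M) ∨
    (∃ (W : AddSubgroup G) (u : G), u ∈ M ∧ u + u ∉ M ∧
      (W : Set G) = ↑(insert (u + u) M)) := by
  by_cases hJex : ∀ x ∈ M, x + x ∈ M
  · left
    apply exists_addSubgroup_of_closed M h0
    intro x hx y hy
    by_cases hxy : x = y
    · rw [hxy]; exact hJex y hy
    · exact hcl x hx y hy hxy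
  · right
    push_neg at hJex
    obtain ⟨w0, hw0M, hw0⟩ := hJex
    -- basic facts
    have Jne0 : ∀ u : G, u ∈ M → u + u ∉ M → u ≠ 0 := by
      intro u _ huu h
      exact huu (by rw [h, add_zero]; exact h0)
    have leftcl : ∀ x, x ∈ M → x + x ∈ M → ∀ z ∈ M, x + z ∈ M := by
      intro x hx hxx z hz
      by_cases h : z = x
      · rw [h]; exact hxx
      · exact hcl x hx z hz (fun he => h he.symm)
    have rightcl : ∀ x, x ∈ M → x + x ∈ M → ∀ z ∈ M, z + x ∈ M := by
      intro x hx hxx z hz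
      by_cases h : z = x
      · rw [h]; exact hxx
      · exact hcl z hz x hx h
    have leftsur : ∀ x, x ∈ M → x + x ∈ M → ∀ z ∈ M, ∃ y ∈ M, x + y = z := by
      intro x hx hxx z hz
      have himg : M.image (fun y => x + y) = M :=
        Finset.eq_of_subset_of_card_le
          (fun w hw => by
            obtain ⟨y, hy, rfl⟩ := Finset.mem_image.1 hw
            exact leftcl x hx hxx y hy)
          (le_of_eq (Finset.card_image_of_injective M (add_right_injective x)).symm)
      have : z ∈ M.image (fun y => x + y) := by rw [himg]; exact hz
      obtain ⟨y, hy, he⟩ := Finset.mem_image.1 this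
      exact ⟨y, hy, he⟩
    have Kadd : ∀ x y, x ∈ M → x + x ∈ M → y ∈ M → y + y ∈ M →
        ((x + y) ∈ M ∧ (x + y) + (x + y) ∈ M) := by
      intro x y hx hxx hy hyy
      have h1 : x + y ∈ M := leftcl x hx hxx y hy
      refine ⟨h1, ?_⟩
      have t2 : y + (x + y) ∈ M := leftcl y hy hyy _ h1
      have t3 : x + (y + (x + y)) ∈ M := leftcl x hx hxx _ t2
      have he : x + (y + (x + y)) = (x + y) + (x + y) := by simp [add_assoc]
      rwa [he] at t3
    have Kneg : ∀ x, x ∈ M → x + x ∈ M → (-x ∈ M ∧ (-x) + (-x) ∈ M) := by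
      intro x hx hxx
      obtain ⟨y, hyM, hy⟩ := leftsur x hx hxx 0 h0
      have hyx : y = -x := eq_neg_of_add_eq_zero_right hy
      rw [hyx] at hyM
      refine ⟨hyM, ?_⟩
      obtain ⟨hm, hmm⟩ := Kadd x x hx hxx hx hxx
      obtain ⟨z, hzM, hz⟩ := leftsur (x + x) hm hmm 0 h0
      have hzx : z = -(x + x) := eq_neg_of_add_eq_zero_right hz
      rw [hzx, neg_add_rev] at hzM
      exact hzM
    have KJl : ∀ x u, x ∈ M → x + x ∈ M → u ∈ M → u + u ∉ M →
        ((x + u) ∈ M ∧ (x + u) + (x + u) ∉ M) := by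
      intro x u hx hxx hu huu
      have hm : x + u ∈ M := leftcl x hx hxx u hu
      refine ⟨hm, fun hdd => ?_⟩
      obtain ⟨hnx, hnxx⟩ := Kneg x hx hxx
      obtain ⟨hs, hss⟩ := Kadd (-x) (x + u) hnx hnxx hm hdd
      rw [neg_add_cancel_left] at hss
      exact huu hss
    have KJr : ∀ x u, x ∈ M → x + x ∈ M → u ∈ M → u + u ∉ M →
        ((u + x) ∈ M ∧ (u + x) + (u + x) ∉ M) := by
      intro x u hx hxx hu huu
      have hm : u + x ∈ M := rightcl x hx hxx u hu
      refine ⟨hm, fun hdd => ?_⟩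
      obtain ⟨hnx, hnxx⟩ := Kneg x hx hxx
      obtain ⟨hs, hss⟩ := Kadd (u + x) (-x) hm hdd hnx hnxx
      rw [add_neg_cancel_right] at hss
      exact huu hss
    -- mixed pairs are impossible
    have hmix : ∀ u u', u ∈ M → u + u ∉ M → u' ∈ M → u' + u' ∉ M → u ≠ u' →
        (u + u') + (u + u') ∈ M → (u' + u) + (u' + u) ∉ M → False := by
      intro u u' hu huu hu' hu'u' hne hK hs
      have hu0 : u ≠ 0 := Jne0 u hu huu
      have h1 : u + u' ∈ M := hcl u hu u' hu' hne
      have h2 : u' + u ∈ M := hcl u' hu' u hu (Ne.symm hne)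
      have hsu' : (u' + u) ≠ u' := by
        intro h
        exact hu0 (by rwa [add_eq_left] at h)
      have hv : (u' + u) + u' ∈ M := hcl _ h2 u' hu' hsu'
      by_cases hvu : (u' + u) + u' = u
      · -- then (u+u')+(u+u') = u + u ∈ M (since Kp (u+u')), contradiction
        have hkk : (u + u') + (u + u') = u + u := by
          have he : (u + u') + (u + u') = u + ((u' + u) + u') := by simp [add_assoc]
          rw [he, hvu]
        have := hK
        rw [hkk] at this
        exact huu this
      · have hvv : ((u' + u) + u') + u ∈ M := hcl _ hv u hu hvu
        have he : ((u' + u) + u') + u = (u' + u) + (u' + u) := by simp [add_assoc]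
        rw [he] at hvv
        exact hs hvv
    -- dichotomy
    have dich : ∀ u u', u ∈ M → u + u ∉ M → u' ∈ M → u' + u' ∉ M → u ≠ u' →
        ((u + u') + (u + u') ∈ M ∧ (u' + u) + (u' + u) ∈ M) ∨
        ((u + u') + (u + u') ∉ M ∧ (u' + u) + (u' + u) ∉ M) := by
      intro u u' hu huu hu' hu'u' hne
      by_cases c1 : (u + u') + (u + u') ∈ M
      · by_cases c2 : (u' + u) + (u' + u) ∈ M
        · exact Or.inl ⟨c1, c2⟩
        · exact absurd (hmix u u' hu huu hu' hu'u' hne c1 c2) (fun h => h)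
      · by_cases c2 : (u' + u) + (u' + u) ∈ M
        · exact absurd (hmix u' u hu' hu'u' hu huu (Ne.symm hne) c2 c1) (fun h => h)
        · exact Or.inr ⟨c1, c2⟩
    -- both-J pairs: key relations
    have c5 : ∀ u u', u ∈ M → u + u ∉ M → u' ∈ M → u' + u' ∉ M → u ≠ u' →
        (u + u') + (u + u') ∉ M → (u' + u) + (u' + u) ∉ M →
        ((u + u') + u = u' ∧ u' + u' = u + u) := by
      intro u u' hu huu hu' hu'u' hne hx2 hy2
      have hu0 : u ≠ 0 := Jne0 u hu huu
      have hu'0 : u' ≠ 0 := Jne0 u' hu' hu'u'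
      have hxM : u + u' ∈ M := hcl u hu u' hu' hne
      have hyM : u' + u ∈ M := hcl u' hu' u hu (Ne.symm hne)
      have hxu : (u + u') ≠ u := by
        intro h
        exact hu'0 (by rwa [add_eq_left] at h)
      have hs2 : (u + u') + u ∈ M := hcl _ hxM u hu hxu
      have h1 : (u + u') + u = u' := by
        by_contra hne2
        have hm : ((u + u') + u) + u' ∈ M := hcl _ hs2 u' hu' hne2
        have he : ((u + u') + u) + u' = (u + u') + (u + u') := by simp [add_assoc]
        rw [he] at hm
        exact hx2 hm
      have hyu : (u' + u) ≠ u' := by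
        intro h
        exact hu0 (by rwa [add_eq_left] at h)
      have hs2' : (u' + u) + u' ∈ M := hcl _ hyM u' hu' hyu
      have h2 : (u' + u) + u' = u := by
        by_contra hne2
        have hm : ((u' + u) + u') + u ∈ M := hcl _ hs2' u hu hne2
        have he : ((u' + u) + u') + u = (u' + u) + (u' + u) := by simp [add_assoc]
        rw [he] at hm
        exact hy2 hm
      refine ⟨h1, ?_⟩
      -- from h1 : u + (u'+u) = u' so u' + u = -u + u'
      have hd : u' + u = -u + u' := by
        have h1' : u + (u' + u) = u' := by rw [← add_assoc]; exact h1
        have h2' := congrArg (fun z => -u + z) h1'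
        simpa using h2'
      rw [hd] at h2
      have he2 : u + ((-u + u') + u') = u' + u' := by
        rw [← add_assoc, add_neg_cancel_left]
      rw [h2] at he2
      exact he2.symm
    -- existence of a both-J partner
    have c6 : ∀ u, u ∈ M → u + u ∉ M → ∃ u', (u' ∈ M ∧ u' + u' ∉ M) ∧ u' ≠ u ∧
        ((u + u') + (u + u') ∉ M ∧ (u' + u) + (u' + u) ∉ M) := by
      intro u hu huu
      by_contra hc
      have hKall : ∀ u', u' ∈ M → u' + u' ∉ M → u' ≠ u →
          (u + u') + (u + u') ∈ M := by
        intro u' hu' hu'u' hne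
        rcases dich u u' hu huu hu' hu'u' (fun h => hne h.symm) with h | h
        · exact h.1
        · exact absurd ⟨u', ⟨hu', hu'u'⟩, hne, h.1, h.2⟩ hc
      by_cases hK1 : ∃ k, (k ∈ M ∧ k + k ∈ M) ∧ k ≠ 0
      · obtain ⟨k, ⟨hkM, hkk⟩, hk0⟩ := hK1
        obtain ⟨huk, hukk⟩ := KJl k u hkM hkk hu huu
        obtain ⟨huk', hukk'⟩ := KJr k u hkM hkk hu huu
        -- u + k ∈ M, (u+k)+(u+k) ∉ M
        have hne : u + k ≠ u := by
          intro h
          exact hk0 (by rwa [add_eq_left] at h)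
        have hKp : (u + (u + k)) + (u + (u + k)) ∈ M :=
          hKall (u + k) huk' hukk' hne
        -- (u + (u+k)) + -k = u + u
        obtain ⟨hnk, hnkk⟩ := Kneg k hkM hkk
        have hKuk : u + (u + k) ∈ M := by
          have : (u + (u+k)) + (u + (u+k)) ∈ M := hKp
          -- membership directly: u + (u + k): need it in M to use Kadd; derive:
          -- u + (u+k): use hcl u (u+k) if distinct
          have hne2 : u ≠ u + k := fun h => hne h.symm
          exact hcl u hu (u + k) huk' hne2
        obtain ⟨hs, hss⟩ := Kadd (u + (u + k)) (-k) hKuk hKp hnk hnkk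
        have he : (u + (u + k)) + -k = u + u := by
          simp [add_assoc]
        rw [he] at hs
        exact huu hs
      · push_neg at hK1
        -- all of K is 0 : M ⊆ {0, u, -u}
        have hMsub : M ⊆ {0, u, -u} := by
          intro x hx
          by_cases hxx : x + x ∈ M
          · have : x = 0 := hK1 x ⟨hx, hxx⟩
            simp [this]
          · by_cases hxu : x = u
            · simp [hxu]
            · have hK := hKall x hx hxx hxu
              -- (u + x) + (u + x) ∈ M : and u + x ∈ M
              have huxM : u + x ∈ M := hcl u hu x hx (fun h => hxu h.symm)
              have : u + x = 0 := hK1 (u + x) ⟨huxM, hK⟩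
              have : x = -u := by
                have := eq_neg_of_add_eq_zero_right this
                exact this
              simp [this]
        have hcard3 : ({0, u, -u} : Finset G).card ≤ 3 := by
          apply le_trans (Finset.card_insert_le _ _)
          have : ({u, -u} : Finset G).card ≤ 2 := by
            apply le_trans (Finset.card_insert_le _ _)
            simp
          omega
        have := Finset.card_le_card hMsub
        omega
    -- global tau
    obtain ⟨u0', ⟨hu0'M, hu0'2⟩, hne0, hJ1, hJ2⟩ := c6 w0 hw0M hw0
    have hc5 := c5 w0 u0' hw0M hw0 hu0'M hu0'2 (fun h => hne0 h.symm) hJ1 hJ2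
    have c7 : ∀ u, u ∈ M → u + u ∉ M → u + u = w0 + w0 := by
      intro u hu huu
      by_cases h1 : u = w0
      · rw [h1]
      by_cases h2 : u = u0'
      · rw [h2]; exact hc5.2
      rcases dich w0 u hw0M hw0 hu huu (fun h => h1 h.symm) with hKK | hJJ
      · rcases dich u0' u hu0'M hu0'2 hu huu (fun h => h2 h.symm) with hKK' | hJJ'
        · -- both type-K : contradiction
          exfalso
          have hk1M : w0 + u ∈ M := hcl w0 hw0M u hu (fun h => h1 h.symm)
          have hk2M : u0' + u ∈ M := hcl u0' hu0'M u hu (fun h => h2 h.symm)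
          have hk1 : (w0 + u) + (w0 + u) ∈ M := hKK.1
          have hk2 : (u0' + u) + (u0' + u) ∈ M := hKK'.1
          -- k* := (u0' + u) + -(w0 + u) ; u0' = k* + w0
          obtain ⟨hn1, hn1'⟩ := Kneg (w0 + u) hk1M hk1
          obtain ⟨hks, hkss⟩ := Kadd (u0' + u) (-(w0 + u)) hk2M hk2 hn1 hn1'
          set ks := (u0' + u) + -(w0 + u) with hksdef
          have hstar : u0' = ks + w0 := by
            rw [hksdef]
            simp [add_assoc, neg_add_rev]
          have hks0 : ks ≠ 0 := by
            intro h
            rw [h, zero_add] at hstar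
            exact hne0 hstar
          -- y := w0 + ks ∈ J
          obtain ⟨hyM, hyy⟩ := KJr ks w0 hks hkss hw0M hw0
          -- (w0 + ks) + w0 = ks
          have hstar1 : (w0 + u0') + w0 = u0' := hc5.1
          rw [hstar] at hstar1
          have hyw : (w0 + ks) + w0 = ks := by
            have h' : ((w0 + ks) + w0) + w0 = ks + w0 := by
              rw [← hstar1]; simp [add_assoc]
            exact add_right_cancel h'
          have hynw : w0 + ks ≠ w0 := by
            intro h
            exact hks0 (by rwa [add_eq_left] at h)
          rcases dich (w0 + ks) w0 hyM hyy hw0M hw0 hynw with ⟨hKa, hKb⟩ | ⟨hJa, hJb⟩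
          · -- Kp (w0 + (w0+ks)) ; subtract ks
            have hwyM : w0 + (w0 + ks) ∈ M := hcl w0 hw0M _ hyM (fun h => hynw h.symm)
            obtain ⟨hnks, hnkss⟩ := Kneg ks hks hkss
            obtain ⟨hfin, _⟩ := Kadd (w0 + (w0 + ks)) (-ks) hwyM hKb hnks hnkss
            have he : (w0 + (w0 + ks)) + -ks = w0 + w0 := by
              simp [add_assoc]
            rw [he] at hfin
            exact hw0 hfin
          · rw [hyw] at hJa
            exact hJa hkss
        · exact (c5 u0' u hu0'M hu0'2 hu huu (fun h => h2 h.symm) hJJ'.1 hJJ'.2).2.trans hc5.2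
      · exact (c5 w0 u hw0M hw0 hu huu (fun h => h1 h.symm) hJJ.1 hJJ.2).2
    -- tau is not in M; build W = insert tau M
    have hw00 : w0 ≠ 0 := Jne0 w0 hw0M hw0
    have hτ0 : w0 + w0 ≠ 0 := by
      intro h
      exact hw0 (by rw [h]; exact h0)
    have hx3 : ∀ x, x ∈ M → x + x ∉ M →
        (w0 + w0) + x ∈ M ∧ x + (w0 + w0) ∈ M := by
      intro x hx hxx
      obtain ⟨x', ⟨hx'M, hx'2⟩, hnex, hJ1x, hJ2x⟩ := c6 x hx hxx
      have hτx : x' + x' = w0 + w0 := c7 x' hx'M hx'2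
      have hx0 : x ≠ 0 := Jne0 x hx hxx
      constructor
      · have h1 : x' + x ∈ M := hcl x' hx'M x hx hnex
        have hne1 : x' + x ≠ x' := by
          intro h
          exact hx0 (by rwa [add_eq_left] at h)
        have h2 : x' + (x' + x) ∈ M := hcl x' hx'M _ h1 (fun h => hne1 h.symm)
        have he : x' + (x' + x) = (w0 + w0) + x := by
          rw [← hτx]; simp [add_assoc]
        rwa [he] at h2
      · have h1 : x + x' ∈ M := hcl x hx x' hx'M (fun h => hnex h.symm)
        have hne1 : x + x' ≠ x' := by
          intro h
          exact hx0 (by rwa [add_eq_right] at h)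
        have h2 : (x + x') + x' ∈ M := hcl _ h1 x' hx'M hne1
        have he : (x + x') + x' = x + (w0 + w0) := by
          rw [← hτx]; simp [add_assoc]
        rwa [he] at h2
    have hCadd : ∀ x ∈ insert (w0 + w0) M, ∀ y ∈ insert (w0 + w0) M,
        x + y ∈ insert (w0 + w0) M := by
      intro x hxC y hyC
      rcases Finset.mem_insert.1 hxC with hxτ | hxM
      · rcases Finset.mem_insert.1 hyC with hyτ | hyM
        · -- tau + tau
          rw [hxτ, hyτ]
          apply Finset.mem_insert_of_mem
          have h1 : (w0 + w0) + w0 ∈ M := (hx3 w0 hw0M hw0).1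
          have hne : (w0 + w0) + w0 ≠ w0 := by
            intro h
            exact hτ0 (by rwa [add_eq_right] at h)
          have h2 : ((w0 + w0) + w0) + w0 ∈ M := hcl _ h1 w0 hw0M hne
          have he : ((w0 + w0) + w0) + w0 = (w0 + w0) + (w0 + w0) := by
            simp [add_assoc]
          rwa [he] at h2
        · -- tau + y, y in M
          rw [hxτ]
          by_cases hy0 : y = 0
          · rw [hy0, add_zero]; exact Finset.mem_insert_self _ _
          apply Finset.mem_insert_of_mem
          by_cases hyy : y + y ∈ M
          · -- y in K
            have h1 : w0 + y ∈ M := (KJr y w0 hyM hyy hw0M hw0).1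
            have hne : w0 + y ≠ w0 := by
              intro h
              exact hy0 (by rwa [add_eq_left] at h)
            have h2 : w0 + (w0 + y) ∈ M := hcl w0 hw0M _ h1 (fun h => hne h.symm)
            have he : w0 + (w0 + y) = (w0 + w0) + y := by simp [add_assoc]
            rwa [he] at h2
          · exact (hx3 y hyM hyy).1
      · rcases Finset.mem_insert.1 hyC with hyτ | hyM
        · -- x + tau, x in M
          rw [hyτ]
          by_cases hx0 : x = 0
          · rw [hx0, zero_add]; exact Finset.mem_insert_self _ _
          apply Finset.mem_insert_of_mem
          by_cases hxx : x + x ∈ M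
          · have h1 : x + w0 ∈ M := (KJl x w0 hxM hxx hw0M hw0).1
            have hne : x + w0 ≠ w0 := by
              intro h
              exact hx0 (by rwa [add_eq_right] at h)
            have h2 : (x + w0) + w0 ∈ M := hcl _ h1 w0 hw0M hne
            have he : (x + w0) + w0 = x + (w0 + w0) := by simp [add_assoc]
            rwa [he] at h2
          · exact (hx3 x hxM hxx).2
        · by_cases hxy : x = y
          · by_cases hyy : y + y ∈ M
            · rw [hxy]; exact Finset.mem_insert_of_mem hyy
            · rw [hxy, c7 y hyM hyy]; exact Finset.mem_insert_self _ _
          · exact Finset.mem_insert_of_mem (hcl x hxM y hyM hxy)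
    obtain ⟨W, hW⟩ := exists_addSubgroup_of_closed (insert (w0 + w0) M)
      (Finset.mem_insert_of_mem h0) hCadd
    exact ⟨W, w0, hw0M, hw0, hW⟩


end Stmt15Aux

open Stmt15Aux

theorem stmt_15 {G : Type*} [AddGroup G] [Fintype G] [DecidableEq G]
    (H : AddSubgroup G) (hidx : H.index = 2)
    (hn : 16 ≤ Fintype.card G)
    (S : Finset G) (h0 : (0 : G) ∉ S) (hcard : S.card = Fintype.card G / 2) :
    sumset S = Set.univ := by
  classical
  have hcardH2 : Nat.card H * 2 = Fintype.card G := by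
    have h := AddSubgroup.card_mul_index H
    rwa [hidx, Nat.card_eq_fintype_card (α := G)] at h
  set n := Fintype.card G with hndef
  set m := n / 2 with hmdef
  have hmH : Nat.card H = m := by omega
  have hm8 : 8 ≤ m := by omega
  have hn2 : n = 2 * m := by omega
  set HS : Finset G := Finset.univ.filter (fun x => x ∈ H) with hHSdef
  set QS : Finset G := Finset.univ.filter (fun x => x ∉ H) with hQSdef
  have hHScard : HS.card = m := by
    have h1 : Fintype.card {x : G // x ∈ H} = HS.card := Fintype.card_subtype _
    have h2 : Nat.card H = Fintype.card {x : G // x ∈ H} := Nat.card_eq_fintype_card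
    omega
  have hQScard : QS.card = m := by
    have h1 : HS.card + QS.card = n := by
      have h2 := Finset.card_filter_add_card_filter_not
        (s := (Finset.univ : Finset G)) (p := fun x => x ∈ H)
      rw [Finset.card_univ] at h2
      rw [hHSdef, hQSdef]
      exact h2
    omega
  have memHS : ∀ x : G, x ∈ HS ↔ x ∈ H := by
    intro x; rw [hHSdef]; simp
  have memQS : ∀ x : G, x ∈ QS ↔ x ∉ H := by
    intro x; rw [hQSdef]; simp
  have negQ : ∀ x : G, x ∉ H → -x ∉ H := by
    intro x hx h
    exact hx (by simpa using H.neg_mem h)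
  have addHQ : ∀ x y : G, x ∈ H → y ∉ H → x + y ∉ H := by
    intro x y hx hy h
    have h2 := H.add_mem (H.neg_mem hx) h
    rw [neg_add_cancel_left] at h2
    exact hy h2
  have addQH : ∀ x y : G, x ∉ H → y ∈ H → x + y ∉ H := by
    intro x y hx hy h
    have h2 := H.add_mem h (H.neg_mem hy)
    rw [add_neg_cancel_right] at h2
    exact hx h2
  have addQQ : ∀ x y : G, x ∉ H → y ∉ H → x + y ∈ H := by
    intro x y hx hy
    have hinj : Function.Injective (fun h : G => -x + h) := add_right_injective (-x)
    have himg : HS.image (fun h => -x + h) ⊆ QS := by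
      intro z hz
      obtain ⟨h', hh', rfl⟩ := Finset.mem_image.1 hz
      rw [memQS]
      exact addQH (-x) h' (negQ x hx) ((memHS h').1 hh')
    have hcardeq : (HS.image (fun h => -x + h)).card = m := by
      rw [Finset.card_image_of_injective _ hinj, hHScard]
    have heq : HS.image (fun h => -x + h) = QS :=
      Finset.eq_of_subset_of_card_le himg (by omega)
    have hy' : y ∈ HS.image (fun h => -x + h) := by
      rw [heq, memQS]; exact hy
    obtain ⟨h', hh', he⟩ := Finset.mem_image.1 hy'
    have hxy : x + y = h' := by rw [← he, add_neg_cancel_left]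
    rw [hxy]
    exact (memHS h').1 hh'
  set A : Finset G := S.filter (fun x => x ∈ H) with hAdef
  set B : Finset G := S.filter (fun x => x ∉ H) with hBdef
  set a := A.card with hadef
  set b := B.card with hbdef
  have hab : a + b = m := by
    have h2 := Finset.card_filter_add_card_filter_not
      (s := S) (p := fun x => x ∈ H)
    rw [hcard] at h2
    rw [hadef, hbdef, hAdef, hBdef]
    exact h2
  have hAH : ∀ x ∈ A, x ∈ H := by
    intro x hx; exact (Finset.mem_filter.1 hx).2
  have hBQ : ∀ x ∈ B, x ∉ H := by
    intro x hx; exact (Finset.mem_filter.1 hx).2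
  have hAS : A ⊆ S := Finset.filter_subset _ _
  have hBS : B ⊆ S := Finset.filter_subset _ _
  have hA0 : (0:G) ∉ A := fun h => h0 (hAS h)
  have hAne0 : ∀ x ∈ A, x ≠ 0 := by
    intro x hx h; exact hA0 (h ▸ hx)
  have hBnotA : ∀ s ∈ B, s ∉ A := by
    intro s hs h
    exact hBQ s hs (hAH s h)
  have hqnotA : ∀ s : G, s ∉ H → s ∉ A := by
    intro s hs h
    exact hs (hAH s h)
  have hb1 : 1 ≤ b := by
    have hsub : A ⊆ HS.erase 0 := by
      intro x hx
      exact Finset.mem_erase.2 ⟨hAne0 x hx, (memHS x).2 (hAH x hx)⟩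
    have h1 := Finset.card_le_card hsub
    rw [Finset.card_erase_of_mem ((memHS (0:G)).2 H.zero_mem), hHScard] at h1
    omega
  set M : Finset G := insert 0 A with hMdef
  have hMcard : M.card = a + 1 := by
    rw [hMdef, Finset.card_insert_of_notMem hA0, hadef]
  have hMH : ∀ x ∈ M, x ∈ H := by
    intro x hx
    rcases Finset.mem_insert.1 hx with h | h
    · rw [h]; exact H.zero_mem
    · exact hAH x h
  have hMHS : M ⊆ HS := fun x hx => (memHS x).2 (hMH x hx)
  rw [Set.eq_univ_iff_forall]
  intro g
  by_cases hg : g ∈ H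
  swap
  · -- ======== Q-targets ========
    have hinj : Function.Injective (fun s : G => g + -s) := by
      intro s t hst
      simp only at hst
      exact neg_injective (add_left_cancel hst)
    set V := B.image (fun s => g + -s) with hVdef
    have hVcard : V.card = b := by
      rw [hVdef, Finset.card_image_of_injective _ hinj, hbdef]
    have hVHS : V ⊆ HS := by
      intro z hz
      obtain ⟨s, hs, rfl⟩ := Finset.mem_image.1 hz
      exact (memHS _).2 (addQQ g (-s) hg (negQ s (hBQ s hs)))
    obtain ⟨t, htM, htV⟩ := pigeon M V HS hMHS hVHS (by omega)
    obtain ⟨s, hsB, hse⟩ := Finset.mem_image.1 htV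
    have hg' : t + s = g := by rw [← hse, add_assoc, neg_add_cancel, add_zero]
    have ht' : t ∈ sumsOf A := mem_sumsOf_insert0 (by rw [← hMdef]; exact htM)
    have hfin := sumset_step hAS ht' (hBS hsB) (hBnotA s hsB)
    rwa [hg'] at hfin
  · -- ======== H-targets ========
    rcases eq_or_lt_of_le hb1 with hb1' | hb2
    · -- ----- b = 1 -----
      have hbeq : b = 1 := hb1'.symm
      have hAeq : A = HS.erase 0 := by
        apply Finset.eq_of_subset_of_card_le
        · intro x hx
          exact Finset.mem_erase.2 ⟨hAne0 x hx, (memHS x).2 (hAH x hx)⟩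
        · rw [Finset.card_erase_of_mem ((memHS (0:G)).2 H.zero_mem), hHScard]
          omega
      have hmemA : ∀ x : G, x ∈ H → x ≠ 0 → x ∈ A := by
        intro x hx hx0
        rw [hAeq]
        exact Finset.mem_erase.2 ⟨hx0, (memHS x).2 hx⟩
      by_cases hg0 : g = 0
      · by_cases hex : ∃ x ∈ A, x + x ≠ 0
        · obtain ⟨x, hxA, hxx⟩ := hex
          have hnxA : -x ∈ A := hmemA (-x) (H.neg_mem (hAH x hxA))
            (neg_ne_zero.2 (hAne0 x hxA))
          have hne : x ≠ -x := by
            intro h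
            exact hxx (eq_neg_iff_add_eq_zero.1 h)
          refine mem_sumset_of_list (l := [x, -x]) (by simp [hne]) (by simp) ?_ (by simp [hg0])
          intro y hy
          rcases List.mem_pair.1 hy with h | h
          · rw [h]; exact hAS hxA
          · rw [h]; exact hAS hnxA
        · push_neg at hex
          have hA2 : 1 < A.card := by omega
          obtain ⟨x, hxA, y, hyA, hxy⟩ := Finset.one_lt_card.1 hA2
          have hz0 : x + y ≠ 0 := by
            intro h
            have hyx : y = -x := eq_neg_of_add_eq_zero_right h
            have hxinv : x = -x := eq_neg_of_add_eq_zero_right (hex x hxA)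
            rw [← hxinv] at hyx
            exact hxy hyx.symm
          have hzA : x + y ∈ A := hmemA _ (H.add_mem (hAH x hxA) (hAH y hyA)) hz0
          have hzx : x + y ≠ x := by
            intro h
            exact hAne0 y hyA (by rwa [add_eq_left] at h)
          have hzy : x + y ≠ y := by
            intro h
            exact hAne0 x hxA (by rwa [add_eq_right] at h)
          refine mem_sumset_of_list (l := [x, y, x + y])
            ?_ (by simp) ?_ ?_
          · have h1 : x ≠ x + y := fun h => hzx h.symm
            have h2 : y ≠ x + y := fun h => hzy h.symm
            simp [hxy, h1, h2]
          · intro w hw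
            rcases List.mem_cons.1 hw with h | hw
            · rw [h]; exact hAS hxA
            rcases List.mem_cons.1 hw with h | hw
            · rw [h]; exact hAS hyA
            simp at hw
            rw [hw]; exact hAS hzA
          · rw [hg0]
            simp only [List.sum_cons, List.sum_nil, add_zero]
            rw [← add_assoc]
            exact hex (x+y) hzA
      · refine mem_sumset_of_list (l := [g]) (by simp) (by simp) ?_ (by simp)
        intro y hy
        simp at hy
        rw [hy]; exact hAS (hmemA g hg hg0)
    · -- b ≥ 2
      by_cases ha0 : a = 0
      · -- ----- a = 0 : B = QS -----
        have hBeq : B = QS := by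
          apply Finset.eq_of_subset_of_card_le
          · intro x hx; exact (memQS x).2 (hBQ x hx)
          · omega
        have hmemB : ∀ x : G, x ∉ H → x ∈ B := by
          intro x hx; rw [hBeq]; exact (memQS x).2 hx
        by_cases hex : ∃ s ∈ QS, s + s ≠ g
        · obtain ⟨s, hsQ, hss⟩ := hex
          have hsQ' : s ∉ H := (memQS s).1 hsQ
          have hqQ : -s + g ∉ H := addQH (-s) g (negQ s hsQ') hg
          have hqs : -s + g ≠ s := by
            intro h
            apply hss
            have h2 := congrArg (fun z => s + z) h
            simpa [add_neg_cancel_left] using h2.symm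
          refine mem_sumset_of_list (l := [s, -s + g])
            (by simp; exact fun h => hqs h.symm) (by simp) ?_ (by simp)
          intro y hy
          rcases List.mem_pair.1 hy with h | h
          · rw [h]; exact hBS (hmemB s hsQ')
          · rw [h]; exact hBS (hmemB _ hqQ)
        · push_neg at hex
          have hQne : QS.Nonempty := Finset.card_pos.1 (by omega)
          obtain ⟨s1, hs1⟩ := hQne
          have hs1' : s1 ∉ H := (memQS s1).1 hs1
          have hT2 : ((QS \ {s1, -s1}) : Finset G).Nonempty := by
            apply Finset.card_pos.1
            have h1 : ({s1, -s1} : Finset G).card ≤ 2 := by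
              apply le_trans (Finset.card_insert_le _ _); simp
            have h2 := Finset.le_card_sdiff ({s1, -s1} : Finset G) QS
            omega
          obtain ⟨s2, hs2⟩ := hT2
          have hs2Q : s2 ∈ QS := (Finset.mem_sdiff.1 hs2).1
          have hs2' : s2 ∉ H := (memQS s2).1 hs2Q
          have hs2ne : s2 ≠ s1 ∧ s2 ≠ -s1 := by
            have h2 := (Finset.mem_sdiff.1 hs2).2
            simp at h2
            exact h2
          have hwH : s1 + s2 ∈ H := addQQ s1 s2 hs1' hs2'
          have hw0 : s1 + s2 ≠ 0 := by
            intro h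
            exact hs2ne.2 (eq_neg_of_add_eq_zero_right h)
          set w' := -(s1 + s2) + g with hw'def
          have hw'H : w' ∈ H := H.add_mem (H.neg_mem hwH) hg
          have hw'g : w' ≠ g := by
            intro h
            apply hw0
            rw [hw'def] at h
            have h2 : -(s1 + s2) + g = 0 + g := by rw [h, zero_add]
            have h3 := add_right_cancel h2
            exact neg_eq_zero.1 h3
          have hT4 : ((QS \ {s1, s2, w' + -s1, w' + -s2}) : Finset G).Nonempty := by
            apply Finset.card_pos.1
            have h1 : ({s1, s2, w' + -s1, w' + -s2} : Finset G).card ≤ 4 := by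
              apply le_trans (Finset.card_insert_le _ _)
              have h2 : ({s2, w' + -s1, w' + -s2} : Finset G).card ≤ 3 := by
                apply le_trans (Finset.card_insert_le _ _)
                have h3 : ({w' + -s1, w' + -s2} : Finset G).card ≤ 2 := by
                  apply le_trans (Finset.card_insert_le _ _); simp
                omega
              omega
            have h2 := Finset.le_card_sdiff ({s1, s2, w' + -s1, w' + -s2} : Finset G) QS
            omega
          obtain ⟨s3, hs3⟩ := hT4
          have hs3Q : s3 ∈ QS := (Finset.mem_sdiff.1 hs3).1
          have hs3' : s3 ∉ H := (memQS s3).1 hs3Q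
          have hs3ne : s3 ≠ s1 ∧ s3 ≠ s2 ∧ s3 ≠ w' + -s1 ∧ s3 ≠ w' + -s2 := by
            have h2 := (Finset.mem_sdiff.1 hs3).2
            simp at h2
            exact h2
          have hs4' : -s3 + w' ∉ H := addQH (-s3) w' (negQ s3 hs3') hw'H
          have hs43 : -s3 + w' ≠ s3 := by
            intro h
            have h2 := congrArg (fun z => s3 + z) h
            simp only [add_neg_cancel_left] at h2
            exact hw'g (h2.trans (hex s3 hs3Q))
          have hs41 : -s3 + w' ≠ s1 := by
            intro h
            have h2 := congrArg (fun z => s3 + z) h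
            simp only [add_neg_cancel_left] at h2
            have h3 := congrArg (fun z => z + -s1) h2
            simp only [add_neg_cancel_right] at h3
            exact hs3ne.2.2.1 h3.symm
          have hs42 : -s3 + w' ≠ s2 := by
            intro h
            have h2 := congrArg (fun z => s3 + z) h
            simp only [add_neg_cancel_left] at h2
            have h3 := congrArg (fun z => z + -s2) h2
            simp only [add_neg_cancel_right] at h3
            exact hs3ne.2.2.2 h3.symm
          refine mem_sumset_of_list (l := [s1, s2, s3, -s3 + w'])
            ?_ (by simp) ?_ ?_
          · have h12 : s1 ≠ s2 := fun h => hs2ne.1 h.symm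
            have h13 : s1 ≠ s3 := fun h => hs3ne.1 h.symm
            have h14 : s1 ≠ -s3 + w' := fun h => hs41 h.symm
            have h23 : s2 ≠ s3 := fun h => hs3ne.2.1 h.symm
            have h24 : s2 ≠ -s3 + w' := fun h => hs42 h.symm
            have h34 : s3 ≠ -s3 + w' := fun h => hs43 h.symm
            simp [h12, h13, h14, h23, h24, h34]
          · intro y hy
            simp only [List.mem_cons, List.not_mem_nil, or_false] at hy
            rcases hy with h | h | h | h
            · rw [h]; exact hBS (hmemB s1 hs1')
            · rw [h]; exact hBS (hmemB s2 hs2')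
            · rw [h]; exact hBS (hmemB s3 hs3')
            · rw [h]; exact hBS (hmemB _ hs4')
          · simp only [List.sum_cons, List.sum_nil, add_zero]
            rw [hw'def]
            simp [add_assoc]
      · -- a ≥ 1
        have ha1 : 1 ≤ a := by omega
        by_cases hba : a + 2 ≤ b
        · -- ----- R-II : count t + s + q -----
          have hwit : ∃ t ∈ M, ∃ s ∈ B, ∃ q ∈ B, q ≠ s ∧ (t + s) + q = g := by
            by_contra hc
            push_neg at hc
            set f : G × G → G := fun p => -p.2 + (-p.1 + g) with hfdef
            have hsum_eq : ∀ p : G × G, (p.1 + p.2) + f p = g := by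
              intro p
              rw [hfdef]
              simp [add_assoc]
            have hfQ : ∀ p ∈ M ×ˢ B, f p ∉ H := by
              intro p hp
              obtain ⟨hpM, hpB⟩ := Finset.mem_product.1 hp
              rw [hfdef]
              exact addQH _ _ (negQ _ (hBQ _ hpB)) (H.add_mem (H.neg_mem (hMH _ hpM)) hg)
            have hfB : ∀ p ∈ M ×ˢ B, f p ∈ B → f p = p.2 := by
              intro p hp hfb
              by_contra hne
              obtain ⟨hpM, hpB⟩ := Finset.mem_product.1 hp
              exact hc p.1 hpM p.2 hpB (f p) hfb hne (hsum_eq p)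
            set P2 := (M ×ˢ B).filter (fun p => f p = p.2) with hP2def
            set P1 := (M ×ˢ B).filter (fun p => ¬ f p = p.2) with hP1def
            have hP2card : P2.card ≤ b := by
              have hle : P2.card ≤ B.card := by
                apply Finset.card_le_card_of_injOn (fun p => p.2)
                · intro p hp
                  exact (Finset.mem_product.1 (Finset.mem_filter.1 hp).1).2
                · intro p hp p' hp' he
                  have hp1 := Finset.mem_filter.1 (Finset.mem_coe.1 hp)
                  have hp1' := Finset.mem_filter.1 (Finset.mem_coe.1 hp')
                  have e1 : -p.1 + g = p.2 + p.2 := by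
                    have h := hp1.2
                    rw [hfdef] at h
                    have h2 := congrArg (fun z => p.2 + z) h
                    simpa [add_neg_cancel_left] using h2
                  have e2 : -p'.1 + g = p'.2 + p'.2 := by
                    have h := hp1'.2
                    rw [hfdef] at h
                    have h2 := congrArg (fun z => p'.2 + z) h
                    simpa [add_neg_cancel_left] using h2
                  have hsnd : p.2 = p'.2 := he
                  rw [hsnd, ← e2] at e1
                  have hneg : -p.1 = -p'.1 := add_right_cancel e1
                  exact Prod.ext (neg_injective hneg) hsnd
              omega
            have hP1card : P1.card ≤ (a+1) * a := by
              have h1 : P1.card ≤ (M ×ˢ (QS \ B)).card := by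
                apply Finset.card_le_card_of_injOn (fun p => (p.1, f p))
                · intro p hp
                  obtain ⟨hpMB, hpne⟩ := Finset.mem_filter.1 hp
                  obtain ⟨hpM, hpB⟩ := Finset.mem_product.1 hpMB
                  apply Finset.mem_product.2
                  refine ⟨hpM, Finset.mem_sdiff.2 ⟨(memQS _).2 (hfQ p hpMB), ?_⟩⟩
                  intro hfb
                  exact hpne (hfB p hpMB hfb)
                · intro p hp p' hp' he
                  have he' : (p.1, f p) = (p'.1, f p') := he
                  have hpair := Prod.mk.inj he'
                  have h1 : p.1 = p'.1 := hpair.1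
                  have h2 : f p = f p' := hpair.2
                  rw [hfdef] at h2
                  simp only at h2
                  rw [h1] at h2
                  have h3 : -p.2 = -p'.2 := add_right_cancel h2
                  exact Prod.ext h1 (neg_injective h3)
              have h2 : (M ×ˢ (QS \ B)).card = (a+1) * a := by
                rw [Finset.card_product, hMcard]
                have h3 : (QS \ B).card = a := by
                  rw [Finset.card_sdiff_of_subset (fun x hx => (memQS x).2 (hBQ x hx))]
                  omega
                rw [h3]
              omega
            have htotal : P2.card + P1.card = (a+1) * b := by
              rw [hP2def, hP1def,
                Finset.card_filter_add_card_filter_not (fun p => f p = p.2),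
                Finset.card_product, hMcard]
            have hcontra : (a+1) * b ≤ (a+1) * a + b := by omega
            have hmul : a * b ≤ a * (a + 1) := by nlinarith
            have hb' : b ≤ a + 1 := Nat.le_of_mul_le_mul_left hmul (by omega)
            omega
          obtain ⟨t, htM, s, hsB, q, hqB, hqs, hsum⟩ := hwit
          have ht' : t ∈ sumsOf A := mem_sumsOf_insert0 (by rw [← hMdef]; exact htM)
          have h1 : t + s ∈ sumsOf (insert s A) := sumsOf_append ht' (hBnotA s hsB)
          have hqs' : q ∉ insert s A := by
            simp only [Finset.mem_insert]
            push_neg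
            exact ⟨hqs, hBnotA q hqB⟩
          have hins : insert s A ⊆ S := Finset.insert_subset (hBS hsB) hAS
          have hfin := sumset_step hins h1 (hBS hqB) hqs'
          rwa [hsum] at hfin
        · -- ----- 2 ≤ b ≤ a + 1 : tight analysis -----
          have hba' : b ≤ a + 1 := by omega
          by_cases hC4a : ∃ q ∈ B, a + 2 ≤ (QS.filter (fun x => x ∈ sumsOf (insert q A))).card
          · obtain ⟨q, hqB, hq⟩ := hC4a
            have hinj : Function.Injective (fun s : G => g + -s) := by
              intro s t hst
              simp only at hst
              exact neg_injective (add_left_cancel hst)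
            set V := (B.erase q).image (fun s => g + -s) with hVdef
            have hVcard : V.card = b - 1 := by
              rw [hVdef, Finset.card_image_of_injective _ hinj,
                Finset.card_erase_of_mem hqB]
            have hVQS : V ⊆ QS := by
              intro z hz
              obtain ⟨s, hs, rfl⟩ := Finset.mem_image.1 hz
              have hsB := Finset.mem_of_mem_erase hs
              exact (memQS _).2 (addHQ g (-s) hg (negQ s (hBQ s hsB)))
            have hFqQS : QS.filter (fun x => x ∈ sumsOf (insert q A)) ⊆ QS :=
              Finset.filter_subset _ _
            obtain ⟨x, hxF, hxV⟩ := pigeon _ V QS hFqQS hVQS (by omega)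
            obtain ⟨s, hsE, hse⟩ := Finset.mem_image.1 hxV
            have hsB := Finset.mem_of_mem_erase hsE
            have hsq : s ≠ q := Finset.ne_of_mem_erase hsE
            have hx' : x ∈ sumsOf (insert q A) := (Finset.mem_filter.1 hxF).2
            have hsno : s ∉ insert q A := by
              simp only [Finset.mem_insert]
              push_neg
              exact ⟨hsq, hBnotA s hsB⟩
            have hins : insert q A ⊆ S := Finset.insert_subset (hBS hqB) hAS
            have hfin := sumset_step hins hx' (hBS hsB) hsno
            have hg' : x + s = g := by rw [← hse, add_assoc, neg_add_cancel, add_zero]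
            rwa [hg'] at hfin
          · exfalso
            push_neg at hC4a
            obtain ⟨q0, hq0B⟩ := Finset.card_pos.1 (show 0 < B.card by omega)
            have hFq : ∀ q ∈ B, QS.filter (fun x => x ∈ sumsOf (insert q A))
                = M.image (fun t => t + q) := by
              intro q hqB
              have hsub : M.image (fun t => t + q) ⊆
                  QS.filter (fun x => x ∈ sumsOf (insert q A)) := by
                intro z hz
                obtain ⟨t, htM, rfl⟩ := Finset.mem_image.1 hz
                refine Finset.mem_filter.2
                  ⟨(memQS _).2 (addHQ t q (hMH t htM) (hBQ q hqB)), ?_⟩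
                exact sumsOf_append (mem_sumsOf_insert0 (by rw [← hMdef]; exact htM))
                  (hqnotA q (hBQ q hqB))
              have hcards : (M.image (fun t => t + q)).card = a + 1 := by
                rw [Finset.card_image_of_injective _ (add_left_injective q), hMcard]
              have hle := hC4a q hqB
              exact (Finset.eq_of_subset_of_card_le hsub (by omega)).symm
            have hPA : ∀ x, x ∈ sumsOf A → x ∈ M := by
              intro x hx
              have hxH : x ∈ H := by
                obtain ⟨l, hnd, hmem, hsum⟩ := hx
                rw [← hsum]
                exact list_sum_mem_H H l (fun y hy => hAH y (hmem y hy))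
              have h1 : x + q0 ∈ sumsOf (insert q0 A) :=
                sumsOf_append hx (hqnotA q0 (hBQ q0 hq0B))
              have h2 : x + q0 ∈ QS.filter (fun y => y ∈ sumsOf (insert q0 A)) :=
                Finset.mem_filter.2 ⟨(memQS _).2 (addHQ x q0 hxH (hBQ q0 hq0B)), h1⟩
              rw [hFq q0 hq0B] at h2
              obtain ⟨t, htM, he⟩ := Finset.mem_image.1 h2
              have het : t = x := add_right_cancel he
              rwa [← het]
            have hMcl : ∀ x ∈ M, ∀ y ∈ M, x ≠ y → x + y ∈ M := by
              intro x hxM y hyM hne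
              rcases Finset.mem_insert.1 hxM with h | hxA
              · rw [h, zero_add]; exact hyM
              rcases Finset.mem_insert.1 hyM with h | hyA
              · rw [h, add_zero]; exact hxM
              apply hPA
              refine ⟨[x, y], by simp [hne], ?_, by simp⟩
              intro z hz
              rcases List.mem_pair.1 hz with h | h
              · rw [h]; exact hxA
              · rw [h]; exact hyA
            have hM0 : (0:G) ∈ M := Finset.mem_insert_self _ _
            have ha4 : 4 ≤ a := by omega
            have hM4 : 4 ≤ M.card := by omega
            rcases closed_structure M hM0 hMcl hM4 with ⟨W, hW⟩ | ⟨W, u, huM, huu, hW⟩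
            · -- W = M : (a+1) ∣ m, contradiction
              have hle : W ≤ H := by
                intro x hx
                have hx' : x ∈ (W : Set G) := hx
                rw [hW] at hx'
                exact hMH x hx'
              have hdvd := AddSubgroup.card_dvd_of_le hle
              have hcW : Nat.card W = a + 1 := by
                have e1 : Nat.card W = ((W : Set G)).ncard := by
                  rw [← Nat.card_coe_set_eq]; rfl
                rw [e1, hW, Set.ncard_coe_finset, hMcard]
              rw [hcW, hmH] at hdvd
              have hdvd' : (a + 1) ∣ a + b := by rw [hab]; exact hdvd
              have hd2 : (a+1) ∣ (b - 1) := by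
                have h3 := Nat.dvd_sub hdvd' (dvd_refl (a+1))
                have he : a + b - (a + 1) = b - 1 := by omega
                rwa [he] at h3
              have := Nat.le_of_dvd (by omega) hd2
              omega
            · -- W = insert (u+u) M
              have hτH : u + u ∈ H := H.add_mem (hMH u huM) (hMH u huM)
              have hle : W ≤ H := by
                intro x hx
                have hx' : x ∈ (W : Set G) := hx
                rw [hW] at hx'
                have hx'' : x ∈ insert (u+u) M := by exact_mod_cast hx'
                rcases Finset.mem_insert.1 hx'' with h | h
                · rw [h]; exact hτH
                · exact hMH x h
              have hdvd := AddSubgroup.card_dvd_of_le hle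
              have hcW : Nat.card W = a + 2 := by
                have e1 : Nat.card W = ((W : Set G)).ncard := by
                  rw [← Nat.card_coe_set_eq]; rfl
                rw [e1, hW, Set.ncard_coe_finset,
                  Finset.card_insert_of_notMem huu, hMcard]
              rw [hcW, hmH] at hdvd
              have hdvd' : (a + 2) ∣ a + b := by rw [hab]; exact hdvd
              have hd2 : (a+2) ∣ (b - 2) := by
                have h3 := Nat.dvd_sub hdvd' (dvd_refl (a+2))
                have he : a + b - (a + 2) = b - 2 := by omega
                rwa [he] at h3
              by_cases hb3 : 3 ≤ b
              · have := Nat.le_of_dvd (by omega) hd2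
                omega
              · -- b = 2 : then m = a + 2, W = H, M = H \ {τ}
                have hb2 : b = 2 := by omega
                have hma2 : m = a + 2 := by omega
                have hcH : Nat.card H = ((H : Set G)).ncard := by
                  rw [← Nat.card_coe_set_eq]; rfl
                have hncW : ((W : Set G)).ncard = m := by
                  rw [hW, Set.ncard_coe_finset, Finset.card_insert_of_notMem huu, hMcard]
                  omega
                have hncH : ((H : Set G)).ncard = m := by omega
                have hWeq : (W : Set G) = (H : Set G) := by
                  apply Set.eq_of_subset_of_ncard_le hle
                  omega
                have hHins : (H : Set G) = ↑(insert (u+u) M) := by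
                  rw [← hWeq, hW]
                have hmemA' : ∀ y : G, y ∈ H → y ≠ u + u → y ∈ M := by
                  intro y hy hyτ
                  have h1 : y ∈ (↑(insert (u+u) M) : Set G) := by
                    rw [← hHins]; exact hy
                  have h2 : y ∈ insert (u+u) M := by exact_mod_cast h1
                  rcases Finset.mem_insert.1 h2 with h | h
                  · exact absurd h hyτ
                  · exact h
                have hrule : ∀ y : G, y ∈ H → y ≠ 0 → y ≠ u + u → y + y = u + u := by
                  intro y hy hy0 hyτ
                  by_contra hne
                  have hzH : -y + (u+u) ∈ H := H.add_mem (H.neg_mem hy) hτH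
                  have hzτ : -y + (u+u) ≠ u + u := by
                    intro h
                    apply hy0
                    have h2 : -y + (u+u) = 0 + (u+u) := by rw [h, zero_add]
                    have h3 := add_right_cancel h2
                    simpa using h3
                  have hzM : -y + (u+u) ∈ M := hmemA' _ hzH hzτ
                  have hyM : y ∈ M := hmemA' y hy hyτ
                  have hzy : y ≠ -y + (u+u) := by
                    intro h
                    apply hne
                    have h2 := congrArg (fun z => y + z) h
                    simp only [add_neg_cancel_left] at h2
                    exact h2
                  have hsum : y + (-y + (u+u)) ∈ M := hMcl y hyM _ hzM hzy
                  rw [add_neg_cancel_left] at hsum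
                  exact huu hsum
                have ha6 : 6 ≤ a := by omega
                have hAmem : ∀ y : G, y ∈ H → y ≠ 0 → y ≠ u + u → y ∈ A := by
                  intro y h1 h2 h3
                  have h4 := hmemA' y h1 h3
                  rcases Finset.mem_insert.1 h4 with h | h
                  · exact absurd h h2
                  · exact h
                obtain ⟨x, hxA⟩ := Finset.card_pos.1 (show 0 < A.card by omega)
                have hT3 : ((A \ {x, -x, -x + (u+u)}) : Finset G).Nonempty := by
                  apply Finset.card_pos.1
                  have h1 : ({x, -x, -x + (u+u)} : Finset G).card ≤ 3 := by
                    apply le_trans (Finset.card_insert_le _ _)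
                    have h2 : ({-x, -x + (u+u)} : Finset G).card ≤ 2 := by
                      apply le_trans (Finset.card_insert_le _ _); simp
                    omega
                  have h2 := Finset.le_card_sdiff ({x, -x, -x + (u+u)} : Finset G) A
                  omega
                obtain ⟨y, hy⟩ := hT3
                have hyA : y ∈ A := (Finset.mem_sdiff.1 hy).1
                have hyne : ¬(y = x ∨ y = -x ∨ y = -x + (u+u)) := by
                  have h2 := (Finset.mem_sdiff.1 hy).2
                  simpa using h2
                push_neg at hyne
                have hwH : x + y ∈ H := H.add_mem (hAH x hxA) (hAH y hyA)
                have hw0 : x + y ≠ 0 := by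
                  intro h
                  exact hyne.2.1 (eq_neg_of_add_eq_zero_right h)
                have hwτ : x + y ≠ u + u := by
                  intro h
                  apply hyne.2.2
                  have h2 := congrArg (fun z => -x + z) h
                  simpa [neg_add_cancel_left] using h2
                have hwA : x + y ∈ A := hAmem _ hwH hw0 hwτ
                have hwx : x + y ≠ x := by
                  intro h
                  exact hAne0 y hyA (by rwa [add_eq_left] at h)
                have hwy : x + y ≠ y := by
                  intro h
                  exact hAne0 x hxA (by rwa [add_eq_right] at h)
                have hτsum : u + u ∈ sumsOf A := by
                  refine ⟨[x, y, x + y], ?_, ?_, ?_⟩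
                  · have h1 : x ≠ y := fun h => hyne.1 h.symm
                    have h2 : x ≠ x + y := fun h => hwx h.symm
                    have h3 : y ≠ x + y := fun h => hwy h.symm
                    simp [h1, h2, h3]
                  · intro z hz
                    rcases List.mem_cons.1 hz with h | hz
                    · rw [h]; exact hxA
                    rcases List.mem_cons.1 hz with h | hz
                    · rw [h]; exact hyA
                    simp at hz
                    rw [hz]; exact hwA
                  · simp only [List.sum_cons, List.sum_nil, add_zero]
                    rw [← add_assoc]
                    exact hrule (x+y) hwH hw0 hwτ
                exact huu (hPA (u+u) hτsum)
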